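/- Let D ∈ ℕ, D ≥ 1, let X and Y be nonempty finite sets, and let (P_x)_{x∈X} and (Q_y)_{y∈Y} be PVMs on ℂ^D with P_x ≠ 0 and Q_y ≠ 0 for all x ∈ X and y ∈ Y. Then every POVM (G_{x,y})_{(x,y)∈X×Y} on ℂ^D can be generated through broadcasting from P and Q; moreover, a channel Φ achieving this can be chosen of measure-and-prepare form Φ(ρ) = Σ_{x∈X} Σ_{y∈Y} tr[ρ G_{x,y}] · (σ^{(1)}_x ⊗ σ^{(2)}_y), where σ^{(1)}_x and σ^{(2)}_y are any states (positive semidefinite trace-one matrices) satisfying σ^{(1)}_x ≤ P_x and σ^{(2)}_y ≤ Q_y in the Loewner order. -/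

import Mathlib

set_option linter.unusedSectionVars false
set_option maxHeartbeats 1000000

open Kronecker Matrix
open scoped ComplexOrder

noncomputable section

/-- A linear map between matrix algebras is completely positive if it maps positive
semidefinite block matrices (with any finite number of blocks) to positive semidefinite
block matrices, blockwise. -/
def IsCPMap {m n : Type} [Fintype m] [DecidableEq m] [Fintype n] [DecidableEq n]
    (Φ : Matrix m m ℂ →ₗ[ℂ] Matrix n n ℂ) : Prop :=
  ∀ (k : ℕ) (A : Matrix (Fin k × m) (Fin k × m) ℂ), A.PosSemidef →
    (Matrix.of fun (p q : Fin k × n) =>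
      Φ (Matrix.of fun a b => A (p.1, a) (q.1, b)) p.2 q.2).PosSemidef

/-- A quantum channel: a trace-preserving completely positive linear map. -/
def IsChannel {m n : Type} [Fintype m] [DecidableEq m] [Fintype n] [DecidableEq n]
    (Φ : Matrix m m ℂ →ₗ[ℂ] Matrix n n ℂ) : Prop :=
  IsCPMap Φ ∧ ∀ ρ : Matrix m m ℂ, (Φ ρ).trace = ρ.trace

/-- A POVM with finite outcome set `X`: positive semidefinite effects summing to the identity. -/
def IsPOVM {X : Type} [Fintype X] {m : Type} [Fintype m] [DecidableEq m]
    (M : X → Matrix m m ℂ) : Prop :=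
  (∀ x, (M x).PosSemidef) ∧ ∑ x, M x = 1

/-- A PVM: a POVM all of whose effects are orthogonal projections. -/
def IsPVM {X : Type} [Fintype X] {m : Type} [Fintype m] [DecidableEq m]
    (M : X → Matrix m m ℂ) : Prop :=
  IsPOVM M ∧ ∀ x, (M x)ᴴ = M x ∧ M x * M x = M x

/-- `G` is generated through broadcasting from `M` and `N` if there is a channel `Φ`
such that `tr[Φ(ρ)(M x ⊗ N y)] = tr[ρ G x y]` for all `ρ, x, y`. -/
def GenByBroadcast {X Y : Type} [Fintype X] [Fintype Y]
    {d m n : Type} [Fintype d] [DecidableEq d] [Fintype m] [DecidableEq m]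
    [Fintype n] [DecidableEq n]
    (M : X → Matrix m m ℂ) (N : Y → Matrix n n ℂ)
    (G : X → Y → Matrix d d ℂ) : Prop :=
  ∃ Φ : Matrix d d ℂ →ₗ[ℂ] Matrix (m × n) (m × n) ℂ, IsChannel Φ ∧
    ∀ (ρ : Matrix d d ℂ) (x : X) (y : Y),
      (Φ ρ * (M x ⊗ₖ N y)).trace = (ρ * G x y).trace

lemma Matrix.posSemidef_iff_eq_transpose_mul_self {m : Type} [Fintype m] [DecidableEq m]
    {A : Matrix m m ℂ} : A.PosSemidef ↔ ∃ B : Matrix m m ℂ, A = Bᴴ * B := by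
  open scoped MatrixOrder in
  constructor
  · intro hA
    exact CStarAlgebra.nonneg_iff_eq_star_mul_self.mp hA.nonneg
  · rintro ⟨B, rfl⟩
    exact Matrix.posSemidef_conjTranspose_mul_self B

section Aux

variable {m n : Type} [Fintype m] [DecidableEq m] [Fintype n] [DecidableEq n]

lemma psd_trace_nonneg {A : Matrix m m ℂ} (hA : A.PosSemidef) : 0 ≤ A.trace := by
  obtain ⟨B, rfl⟩ := Matrix.posSemidef_iff_eq_transpose_mul_self.mp hA
  simp only [Matrix.trace, Matrix.diag, Matrix.mul_apply, Matrix.conjTranspose_apply]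
  exact Finset.sum_nonneg fun i _ => Finset.sum_nonneg fun j _ => star_mul_self_nonneg _

lemma trace_mul_psd_nonneg {A B : Matrix m m ℂ} (hA : A.PosSemidef) (hB : B.PosSemidef) :
    0 ≤ (A * B).trace := by
  obtain ⟨C, rfl⟩ := Matrix.posSemidef_iff_eq_transpose_mul_self.mp hA
  rw [Matrix.mul_assoc, Matrix.trace_mul_comm]
  exact psd_trace_nonneg (hB.mul_mul_conjTranspose_same C)

lemma psd_of_proj {A : Matrix m m ℂ} (h1 : Aᴴ = A) (h2 : A * A = A) : A.PosSemidef := by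
  have h : A = Aᴴ * A := by rw [h1, h2]
  rw [h]; exact Matrix.posSemidef_conjTranspose_mul_self A

lemma sum_psd {ι : Type*} (s : Finset ι) (f : ι → Matrix m m ℂ)
    (h : ∀ i ∈ s, (f i).PosSemidef) : (∑ i ∈ s, f i).PosSemidef := by
  classical
  induction s using Finset.induction_on with
  | empty => simpa using Matrix.PosSemidef.zero
  | insert _ _ hni ih =>
    rw [Finset.sum_insert hni]
    exact ((h _ (Finset.mem_insert_self _ _)).add
      (ih fun i hi => h i (Finset.mem_insert_of_mem hi)))

lemma conjTranspose_kron (A : Matrix m m ℂ) (B : Matrix n n ℂ) :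
    (A ⊗ₖ B)ᴴ = Aᴴ ⊗ₖ Bᴴ := by
  ext ⟨a, b⟩ ⟨c, d⟩
  simp [Matrix.conjTranspose_apply, mul_comm]

lemma kron_psd {A : Matrix m m ℂ} {B : Matrix n n ℂ} (hA : A.PosSemidef) (hB : B.PosSemidef) :
    (A ⊗ₖ B).PosSemidef := by
  obtain ⟨C, rfl⟩ := Matrix.posSemidef_iff_eq_transpose_mul_self.mp hA
  obtain ⟨E, rfl⟩ := Matrix.posSemidef_iff_eq_transpose_mul_self.mp hB
  rw [Matrix.mul_kronecker_mul, ← conjTranspose_kron]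
  exact Matrix.posSemidef_conjTranspose_mul_self _

lemma sum_comm4 {α β γ δ M : Type*} [AddCommMonoid M] [Fintype α] [Fintype β] [Fintype γ]
    [Fintype δ] (f : α → β → γ → δ → M) :
    ∑ a, ∑ b, ∑ c, ∑ d, f a b c d = ∑ c, ∑ d, ∑ a, ∑ b, f a b c d := by
  calc ∑ a, ∑ b, ∑ c, ∑ d, f a b c d
      = ∑ a, ∑ c, ∑ b, ∑ d, f a b c d :=
        Finset.sum_congr rfl fun a _ => Finset.sum_comm
    _ = ∑ c, ∑ a, ∑ b, ∑ d, f a b c d := Finset.sum_comm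
    _ = ∑ c, ∑ a, ∑ d, ∑ b, f a b c d :=
        Finset.sum_congr rfl fun c _ => Finset.sum_congr rfl fun a _ => Finset.sum_comm
    _ = ∑ c, ∑ d, ∑ a, ∑ b, f a b c d :=
        Finset.sum_congr rfl fun c _ => Finset.sum_comm

lemma block_trace_psd {k : Type} [Fintype k] [DecidableEq k]
    {A : Matrix (k × m) (k × m) ℂ} (hA : A.PosSemidef) {Gm : Matrix m m ℂ} (hG : Gm.PosSemidef) :
    (Matrix.of fun i j : k => ((Matrix.of fun a b => A (i, a) (j, b)) * Gm).trace).PosSemidef := by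
  obtain ⟨M, rfl⟩ := Matrix.posSemidef_iff_eq_transpose_mul_self.mp hA
  obtain ⟨R, rfl⟩ := Matrix.posSemidef_iff_eq_transpose_mul_self.mp hG
  set S : Matrix ((k × m) × m) k ℂ :=
    Matrix.of fun (pe : (k × m) × m) (i : k) => ∑ b, M pe.1 (i, b) * star (R pe.2 b) with hS
  have key : (Matrix.of fun i j : k =>
      ((Matrix.of fun a b => (Mᴴ * M) (i, a) (j, b)) * (Rᴴ * R)).trace) = Sᴴ * S := by
    ext i j
    show ((Matrix.of fun a b => (Mᴴ * M) (i, a) (j, b)) * (Rᴴ * R)).trace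
      = ∑ pe : (k × m) × m, star (S pe i) * S pe j
    rw [Fintype.sum_prod_type]
    simp only [hS, Matrix.trace, Matrix.diag, Matrix.mul_apply, Matrix.of_apply,
      Matrix.conjTranspose_apply, star_sum, star_mul', star_star,
      Finset.sum_mul, Finset.mul_sum]
    rw [sum_comm4 (fun a b p e => _), Finset.sum_comm]
    refine Finset.sum_congr rfl fun p _ => Finset.sum_congr rfl fun e _ => ?_
    rw [Finset.sum_comm]
    exact Finset.sum_congr rfl fun a _ => Finset.sum_congr rfl fun b _ => by ring
  rw [key]
  exact Matrix.posSemidef_conjTranspose_mul_self _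

/-- existence of a state below a nonzero orthogonal projection -/
lemma exists_state_le_proj {P : Matrix m m ℂ} (h1 : Pᴴ = P) (h2 : P * P = P) (hne : P ≠ 0) :
    ∃ σ : Matrix m m ℂ, σ.PosSemidef ∧ σ.trace = 1 ∧ (P - σ).PosSemidef := by
  have hcol : ∃ j i, P i j ≠ 0 := by
    by_contra h
    push_neg at h
    exact hne (by ext i j; exact h j i)
  obtain ⟨j, i₀, hij⟩ := hcol
  set w : m → ℂ := fun i => P i j with hw
  have hwne : w ≠ 0 := fun h => hij (congrFun h i₀)
  set r : ℝ := ∑ i, Complex.normSq (w i) with hr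
  have hrpos : 0 < r := by
    rcases Function.ne_iff.mp hwne with ⟨i, hi⟩
    have : 0 < Complex.normSq (w i) := Complex.normSq_pos.mpr hi
    exact lt_of_lt_of_le this (Finset.single_le_sum (fun i _ => Complex.normSq_nonneg (w i))
      (Finset.mem_univ i))
  set c : ℂ := (r : ℂ) with hc
  have hcne : c ≠ 0 := by
    simp [hc, Complex.ofReal_ne_zero]; exact ne_of_gt hrpos
  set Mw : Matrix m m ℂ := Matrix.of fun a b => w a * star (w b) with hM
  have hMM : Mw * Mw = c • Mw := by
    ext a b
    simp only [hM, Matrix.mul_apply, Matrix.of_apply, Matrix.smul_apply, smul_eq_mul, hc, hr]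
    push_cast
    rw [Finset.sum_mul]
    refine Finset.sum_congr rfl fun x _ => ?_
    have : (Complex.normSq (w x) : ℂ) = star (w x) * w x := by
      rw [Complex.normSq_eq_conj_mul_self]; rfl
    rw [this]; ring
  have hPw : ∀ a, (∑ x, P a x * w x) = w a := by
    intro a
    have := congrFun (congrFun h2 a) j
    simpa [Matrix.mul_apply, hw] using this
  have hPM : P * Mw = Mw := by
    ext a b
    simp only [Matrix.mul_apply, hM, Matrix.of_apply]
    calc ∑ x, P a x * (w x * star (w b)) = (∑ x, P a x * w x) * star (w b) := by
          rw [Finset.sum_mul]; exact Finset.sum_congr rfl fun x _ => by ring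
      _ = w a * star (w b) := by rw [hPw a]
  have hMherm : Mwᴴ = Mw := by
    ext a b
    simp [hM, Matrix.conjTranspose_apply, mul_comm]
  have hMP : Mw * P = Mw := by
    have h := congrArg Matrix.conjTranspose hPM
    rw [Matrix.conjTranspose_mul, hMherm, h1] at h
    exact h
  have htr : Mw.trace = c := by
    simp only [hM, Matrix.trace, Matrix.diag, Matrix.of_apply, hc, hr]
    push_cast
    refine Finset.sum_congr rfl fun x _ => ?_
    have : (Complex.normSq (w x) : ℂ) = star (w x) * w x := by
      rw [Complex.normSq_eq_conj_mul_self]; rfl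
    rw [this]; ring
  refine ⟨c⁻¹ • Mw, ?_, ?_, ?_⟩
  · refine Matrix.posSemidef_iff_dotProduct_mulVec.mpr ⟨?_, ?_⟩
    · show (c⁻¹ • Mw)ᴴ = c⁻¹ • Mw
      rw [Matrix.conjTranspose_smul, hMherm]
      congr 1
      simp [hc, ← Complex.ofReal_inv, Complex.conj_ofReal]
    · intro v
      rw [Matrix.smul_mulVec, dotProduct_smul]
      have hquad : star v ⬝ᵥ Mw *ᵥ v = star (∑ x, star (w x) * v x) * (∑ x, star (w x) * v x) := by
        simp only [dotProduct, Matrix.mulVec, dotProduct, hM, Matrix.of_apply,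
          Pi.star_apply, star_sum, star_mul', star_star, Finset.sum_mul, Finset.mul_sum]
        rw [Finset.sum_comm]
        exact Finset.sum_congr rfl fun a _ => Finset.sum_congr rfl fun b _ => by ring
      rw [hquad, smul_eq_mul]
      have h1' : (0:ℂ) ≤ c⁻¹ := by
        rw [hc, ← Complex.ofReal_inv]
        exact Complex.zero_le_real.mpr (inv_nonneg.mpr hrpos.le)
      exact mul_nonneg h1' (star_mul_self_nonneg _)
  · rw [Matrix.trace_smul, htr, smul_eq_mul, inv_mul_cancel₀ hcne]
  · have hσσ : (c⁻¹ • Mw) * (c⁻¹ • Mw) = c⁻¹ • Mw := by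
      rw [Matrix.smul_mul, Matrix.mul_smul, hMM, smul_smul, smul_smul]
      congr 1
      field_simp
    have hPσ : P * (c⁻¹ • Mw) = c⁻¹ • Mw := by rw [Matrix.mul_smul, hPM]
    have hσP : (c⁻¹ • Mw) * P = c⁻¹ • Mw := by rw [Matrix.smul_mul, hMP]
    have hσherm : (c⁻¹ • Mw)ᴴ = c⁻¹ • Mw := by
      rw [Matrix.conjTranspose_smul, hMherm]
      congr 1
      simp [hc, ← Complex.ofReal_inv, Complex.conj_ofReal]
    apply psd_of_proj
    · rw [Matrix.conjTranspose_sub, h1, hσherm]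
    · rw [Matrix.sub_mul, Matrix.mul_sub, Matrix.mul_sub, h2, hPσ, hσP, hσσ]
      abel

/-- key delta property: tr(σ P x) = δ_{x,x'} for a state σ ≤ P x' -/
lemma trace_state_proj_delta {X : Type} [Fintype X] [DecidableEq X]
    (P : X → Matrix m m ℂ)
    (hPproj : ∀ x, (P x)ᴴ = P x ∧ P x * P x = P x) (hPsum : ∑ x, P x = 1)
    {σ : Matrix m m ℂ} (x' : X)
    (hσ : σ.PosSemidef) (hσtr : σ.trace = 1) (hle : (P x' - σ).PosSemidef) :
    ∀ x, (σ * P x).trace = if x = x' then 1 else 0 := by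
  have hPpsd : ∀ x, (P x).PosSemidef := fun x => psd_of_proj (hPproj x).1 (hPproj x).2
  have hnonneg : ∀ x, 0 ≤ (σ * P x).trace := fun x => trace_mul_psd_nonneg hσ (hPpsd x)
  have hone : (σ * P x').trace = 1 := by
    have hproj1 : ((1 : Matrix m m ℂ) - P x')ᴴ = 1 - P x' := by
      rw [Matrix.conjTranspose_sub, Matrix.conjTranspose_one, (hPproj x').1]
    have hproj2 : ((1 : Matrix m m ℂ) - P x') * (1 - P x') = 1 - P x' := by
      rw [Matrix.mul_sub, Matrix.sub_mul, Matrix.sub_mul, (hPproj x').2]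
      simp only [Matrix.one_mul, Matrix.mul_one]
      abel
    have hcompl : ((1 : Matrix m m ℂ) - P x').PosSemidef := psd_of_proj hproj1 hproj2
    have hge : 0 ≤ (σ * (1 - P x')).trace := trace_mul_psd_nonneg hσ hcompl
    have hle2 : 0 ≤ ((P x' - σ) * (1 - P x')).trace := trace_mul_psd_nonneg hle hcompl
    have hPzero : (P x' * (1 - P x')).trace = 0 := by
      rw [Matrix.mul_sub, Matrix.mul_one, (hPproj x').2, sub_self, Matrix.trace_zero]
    rw [Matrix.sub_mul, Matrix.trace_sub, hPzero] at hle2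
    have hzero : (σ * (1 - P x')).trace = 0 := le_antisymm (sub_nonneg.mp hle2) hge
    rw [Matrix.mul_sub, Matrix.mul_one, Matrix.trace_sub, hσtr, sub_eq_zero] at hzero
    exact hzero.symm
  have hsum : ∑ x, (σ * P x).trace = 1 := by
    rw [← Matrix.trace_sum]
    have : ∑ x, σ * P x = σ * ∑ x, P x := by rw [Finset.mul_sum]
    rw [this, hPsum, Matrix.mul_one, hσtr]
  have hrest : ∀ x ∈ Finset.univ.erase x', (σ * P x).trace = 0 := by
    have hsplit : (σ * P x').trace + ∑ x ∈ Finset.univ.erase x', (σ * P x).trace = 1 := by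
      rw [← Finset.add_sum_erase _ _ (Finset.mem_univ x')] at hsum
      exact hsum
    rw [hone] at hsplit
    have hz : ∑ x ∈ Finset.univ.erase x', (σ * P x).trace = 0 := by
      rw [add_comm] at hsplit
      exact add_eq_right.mp hsplit
    exact fun x hx => (Finset.sum_eq_zero_iff_of_nonneg fun x _ => hnonneg x).mp hz x hx
  intro x
  by_cases hx : x = x'
  · rw [hx, hone, if_pos rfl]
  · rw [if_neg hx]
    exact hrest x (Finset.mem_erase.mpr ⟨hx, Finset.mem_univ x⟩)

/-- The measure-and-prepare channel does the job. -/
lemma mp_channel {D : ℕ} {X Y : Type} [Fintype X] [Fintype Y]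
    (P : X → Matrix (Fin D) (Fin D) ℂ) (Q : Y → Matrix (Fin D) (Fin D) ℂ)
    (hP : IsPVM P) (hQ : IsPVM Q)
    (G : X → Y → Matrix (Fin D) (Fin D) ℂ)
    (hG : IsPOVM fun pr : X × Y => G pr.1 pr.2)
    (σ₁ : X → Matrix (Fin D) (Fin D) ℂ) (σ₂ : Y → Matrix (Fin D) (Fin D) ℂ)
    (hσ₁ : ∀ x, (σ₁ x).PosSemidef ∧ (σ₁ x).trace = 1 ∧ (P x - σ₁ x).PosSemidef)
    (hσ₂ : ∀ y, (σ₂ y).PosSemidef ∧ (σ₂ y).trace = 1 ∧ (Q y - σ₂ y).PosSemidef) :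
    ∃ Φ : Matrix (Fin D) (Fin D) ℂ →ₗ[ℂ] Matrix (Fin D × Fin D) (Fin D × Fin D) ℂ,
      IsChannel Φ ∧
      (∀ ρ : Matrix (Fin D) (Fin D) ℂ,
        Φ ρ = ∑ x, ∑ y, (ρ * G x y).trace • (σ₁ x ⊗ₖ σ₂ y)) ∧
      ∀ (ρ : Matrix (Fin D) (Fin D) ℂ) (x : X) (y : Y),
        (Φ ρ * (P x ⊗ₖ Q y)).trace = (ρ * G x y).trace := by
  classical
  refine ⟨{ toFun := fun ρ => ∑ x, ∑ y, (ρ * G x y).trace • (σ₁ x ⊗ₖ σ₂ y)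
            map_add' := ?_
            map_smul' := ?_ }, ⟨?_, ?_⟩, fun ρ => rfl, ?_⟩
  · intro ρ ρ'
    simp only [Matrix.add_mul, Matrix.trace_add, add_smul, Finset.sum_add_distrib]
  · intro c ρ
    simp only [Matrix.smul_mul, Matrix.trace_smul, smul_eq_mul, RingHom.id_apply,
      Finset.smul_sum, smul_smul]
  · -- complete positivity
    intro k A hA
    have hrw : (Matrix.of fun (p q : Fin k × (Fin D × Fin D)) =>
        (∑ x, ∑ y, ((Matrix.of fun a b => A (p.1, a) (q.1, b)) * G x y).trace
          • (σ₁ x ⊗ₖ σ₂ y)) p.2 q.2)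
        = ∑ x, ∑ y,
          ((Matrix.of fun i j : Fin k =>
              ((Matrix.of fun a b => A (i, a) (j, b)) * G x y).trace) ⊗ₖ (σ₁ x ⊗ₖ σ₂ y)) := by
      ext p q
      simp only [Matrix.of_apply, Matrix.sum_apply, Matrix.smul_apply, smul_eq_mul,
        Matrix.kroneckerMap_apply]
    show (Matrix.of fun (p q : Fin k × (Fin D × Fin D)) =>
        (∑ x, ∑ y, ((Matrix.of fun a b => A (p.1, a) (q.1, b)) * G x y).trace
          • (σ₁ x ⊗ₖ σ₂ y)) p.2 q.2).PosSemidef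
    rw [hrw]
    refine sum_psd _ _ fun x _ => sum_psd _ _ fun y _ => ?_
    exact kron_psd (block_trace_psd hA (hG.1 (x, y))) (kron_psd (hσ₁ x).1 (hσ₂ y).1)
  · -- trace preservation
    intro ρ
    show (∑ x, ∑ y, (ρ * G x y).trace • (σ₁ x ⊗ₖ σ₂ y)).trace = ρ.trace
    rw [Matrix.trace_sum]
    simp only [Matrix.trace_sum, Matrix.trace_smul, Matrix.trace_kronecker,
      (hσ₁ _).2.1, (hσ₂ _).2.1]
    simp only [mul_one, smul_eq_mul]
    have : ∑ x, ∑ y, (ρ * G x y).trace = (ρ * ∑ pr : X × Y, G pr.1 pr.2).trace := by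
      rw [Matrix.mul_sum, Matrix.trace_sum, Fintype.sum_prod_type]
    rw [this, hG.2, Matrix.mul_one]
  · -- the trace identity
    intro ρ x y
    show ((∑ x', ∑ y', (ρ * G x' y').trace • (σ₁ x' ⊗ₖ σ₂ y')) * (P x ⊗ₖ Q y)).trace
      = (ρ * G x y).trace
    have hterm : ∀ x' y', (((ρ * G x' y').trace • (σ₁ x' ⊗ₖ σ₂ y')) * (P x ⊗ₖ Q y)).trace
        = (ρ * G x' y').trace * ((if x = x' then 1 else 0) * (if y = y' then 1 else 0)) := by
      intro x' y'
      rw [Matrix.smul_mul, Matrix.trace_smul, ← Matrix.mul_kronecker_mul,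
        Matrix.trace_kronecker, smul_eq_mul]
      congr 2
      · exact trace_state_proj_delta P hP.2 hP.1.2 x' (hσ₁ x').1 (hσ₁ x').2.1 (hσ₁ x').2.2 x
      · exact trace_state_proj_delta Q hQ.2 hQ.1.2 y' (hσ₂ y').1 (hσ₂ y').2.1 (hσ₂ y').2.2 y
    simp only [Matrix.sum_mul, Matrix.trace_sum]
    have hstep : ∑ x', ∑ y', ((ρ * G x' y').trace • (σ₁ x' ⊗ₖ σ₂ y') * (P x ⊗ₖ Q y)).trace
        = ∑ x', ∑ y', (ρ * G x' y').trace *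
            ((if x = x' then 1 else 0) * (if y = y' then 1 else 0)) :=
      Finset.sum_congr rfl fun x' _ => Finset.sum_congr rfl fun y' _ => hterm x' y'
    rw [hstep]
    simp [mul_ite, ite_mul, Finset.sum_ite_eq, Finset.sum_ite_eq']

/-- Remark `rem:measandprep`: any POVM `G` can be generated through
broadcasting from PVMs `P`, `Q` with nonvanishing effects; moreover the broadcasting
channel can be chosen of measure-and-prepare form
`Φ(ρ) = Σ_{x,y} tr[ρ G_{x,y}] σ¹_x ⊗ σ²_y` for any states `σ¹_x ≤ P_x`, `σ²_y ≤ Q_y`. -/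
theorem statement6 (D : ℕ) (hD : 1 ≤ D) (X Y : Type) [Fintype X] [Nonempty X]
    [Fintype Y] [Nonempty Y]
    (P : X → Matrix (Fin D) (Fin D) ℂ) (Q : Y → Matrix (Fin D) (Fin D) ℂ)
    (hP : IsPVM P) (hQ : IsPVM Q)
    (hPne : ∀ x, P x ≠ 0) (hQne : ∀ y, Q y ≠ 0)
    (G : X → Y → Matrix (Fin D) (Fin D) ℂ)
    (hG : IsPOVM fun pr : X × Y => G pr.1 pr.2) :
    GenByBroadcast P Q G ∧
    ∀ (σ₁ : X → Matrix (Fin D) (Fin D) ℂ) (σ₂ : Y → Matrix (Fin D) (Fin D) ℂ),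
      (∀ x, (σ₁ x).PosSemidef ∧ (σ₁ x).trace = 1 ∧ (P x - σ₁ x).PosSemidef) →
      (∀ y, (σ₂ y).PosSemidef ∧ (σ₂ y).trace = 1 ∧ (Q y - σ₂ y).PosSemidef) →
      ∃ Φ : Matrix (Fin D) (Fin D) ℂ →ₗ[ℂ] Matrix (Fin D × Fin D) (Fin D × Fin D) ℂ,
        IsChannel Φ ∧
        (∀ ρ : Matrix (Fin D) (Fin D) ℂ,
          Φ ρ = ∑ x, ∑ y, (ρ * G x y).trace • (σ₁ x ⊗ₖ σ₂ y)) ∧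
        ∀ (ρ : Matrix (Fin D) (Fin D) ℂ) (x : X) (y : Y),
          (Φ ρ * (P x ⊗ₖ Q y)).trace = (ρ * G x y).trace := by
  constructor
  · -- choose states below the projections and use the measure-and-prepare channel
    have h1 : ∀ x : X, ∃ σ : Matrix (Fin D) (Fin D) ℂ,
        σ.PosSemidef ∧ σ.trace = 1 ∧ (P x - σ).PosSemidef := fun x =>
      exists_state_le_proj (hP.2 x).1 (hP.2 x).2 (hPne x)
    have h2 : ∀ y : Y, ∃ σ : Matrix (Fin D) (Fin D) ℂ,
        σ.PosSemidef ∧ σ.trace = 1 ∧ (Q y - σ).PosSemidef := fun y =>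
      exists_state_le_proj (hQ.2 y).1 (hQ.2 y).2 (hQne y)
    choose σ₁ hσ₁ using h1
    choose σ₂ hσ₂ using h2
    obtain ⟨Φ, hΦ, _, hid⟩ := mp_channel P Q hP hQ G hG σ₁ σ₂
      (fun x => ⟨(hσ₁ x).1, (hσ₁ x).2.1, (hσ₁ x).2.2⟩)
      (fun y => ⟨(hσ₂ y).1, (hσ₂ y).2.1, (hσ₂ y).2.2⟩)
    exact ⟨Φ, hΦ, hid⟩
  · intro σ₁ σ₂ hσ₁ hσ₂
    exact mp_channel P Q hP hQ G hG σ₁ σ₂ hσ₁ hσ₂
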